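/- Assume r ≥ 10 and set s = √(r−1) − 3 (so s ≥ 0 and ⟨K − sL, K − sL⟩ = −1). Then every (−1)-class e lies in the cone Q̄ + ℝ_{≥0}·(K − sL), i.e., there exist q ∈ Q̄ and t ≥ 0 with e = q + t·(K − sL). -/

import Mathlib

open scoped BigOperators

noncomputable def mform (r : ℕ) (u v : Fin (r + 1) → ℝ) : ℝ :=
  u 0 * v 0 - ∑ i : Fin r, u i.succ * v i.succ

def lclass (r : ℕ) : Fin (r + 1) → ℝ := fun i => if i = 0 then 1 else 0

def kclass (r : ℕ) : Fin (r + 1) → ℝ := fun i => if i = 0 then -3 else 1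

def Qset (r : ℕ) : Set (Fin (r + 1) → ℝ) :=
  {α | 0 ≤ mform r α α ∧ 0 < mform r α (lclass r)}

def Qbar (r : ℕ) : Set (Fin (r + 1) → ℝ) :=
  {α | 0 ≤ mform r α α ∧ 0 ≤ mform r α (lclass r)}

lemma mform_comm (r : ℕ) (u v : Fin (r + 1) → ℝ) : mform r u v = mform r v u := by
  simp [mform, mul_comm]

lemma mform_sub_left (r : ℕ) (u w v : Fin (r + 1) → ℝ) :
    mform r (u - w) v = mform r u v - mform r w v := by
  simp [mform, sub_mul, Finset.sum_sub_distrib]; ring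

lemma mform_smul_left (r : ℕ) (c : ℝ) (u v : Fin (r + 1) → ℝ) :
    mform r (c • u) v = c * mform r u v := by
  simp [mform, Finset.mul_sum, mul_sub]; ring

lemma mform_sub_right (r : ℕ) (u v w : Fin (r + 1) → ℝ) :
    mform r u (v - w) = mform r u v - mform r u w := by
  rw [mform_comm, mform_sub_left, mform_comm r v u, mform_comm r w u]

lemma mform_smul_right (r : ℕ) (c : ℝ) (u v : Fin (r + 1) → ℝ) :
    mform r u (c • v) = c * mform r u v := by
  rw [mform_comm, mform_smul_left, mform_comm]

lemma mform_LL (r : ℕ) : mform r (lclass r) (lclass r) = 1 := by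
  simp [mform, lclass, Fin.succ_ne_zero]

lemma mform_KL (r : ℕ) : mform r (kclass r) (lclass r) = -3 := by
  simp [mform, kclass, lclass, Fin.succ_ne_zero]

lemma mform_KK (r : ℕ) : mform r (kclass r) (kclass r) = 9 - r := by
  simp [mform, kclass, Fin.succ_ne_zero]
  ring

theorem stmt8 (r : ℕ) (hr : 10 ≤ r) (e : Fin (r + 1) → ℝ)
    (hee : mform r e e = -1) (heK : mform r e (kclass r) = -1)
    (heL : 0 ≤ mform r e (lclass r)) :
    ∃ q ∈ Qbar r, ∃ t : ℝ, 0 ≤ t ∧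
      e = q + t • (kclass r - (Real.sqrt ((r : ℝ) - 1) - 3) • lclass r) := by
  set w := Real.sqrt ((r : ℝ) - 1) with hw
  have hr' : (10 : ℝ) ≤ (r : ℝ) := by exact_mod_cast hr
  have hsq : w ^ 2 = (r : ℝ) - 1 := Real.sq_sqrt (by linarith)
  have hwnn : 0 ≤ w := Real.sqrt_nonneg _
  have hw3 : 3 ≤ w := by nlinarith
  set s := w - 3 with hs
  set d := mform r e (lclass r) with hd
  set t := 1 + s * d with ht
  have hs0 : 0 ≤ s := by linarith
  have ht1 : 1 ≤ t := by nlinarith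
  set M : Fin (r + 1) → ℝ := kclass r - s • lclass r with hM
  have hML : mform r M (lclass r) = -w := by
    rw [hM, mform_sub_left, mform_smul_left, mform_KL, mform_LL]; ring_nf; linarith
  have heM : mform r e M = -1 - s * d := by
    rw [hM, mform_sub_right, mform_smul_right, heK, ← hd]
  have hMe : mform r M e = -1 - s * d := by rw [mform_comm]; exact heM
  have hMM : mform r M M = -1 := by
    rw [hM, mform_sub_right, mform_smul_right, mform_sub_left, mform_smul_left,
      mform_sub_left, mform_smul_left, mform_comm r (lclass r) (kclass r),
      mform_KK, mform_KL, mform_LL]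
    nlinarith
  refine ⟨e - t • M, ⟨?_, ?_⟩, t, by linarith, by module⟩
  · rw [mform_sub_left, mform_sub_right, mform_sub_right, mform_smul_left,
      mform_smul_left, mform_smul_right, mform_smul_right, hee, heM, hMe, hMM]
    nlinarith
  · rw [mform_sub_left, mform_smul_left, hML, ← hd]
    nlinarith
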